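/- Let G be a bull-free graph with no K_4 subgraph, and let Q = v_1 v_2 ... v_p v_1 be a smallest induced odd cycle in G of length p ≥ 5. If w ∈ B_i ∪ C_i, w' ∈ B_{i+1} ∪ C_{i+1}, and ww' is an edge of G, then w ∈ B_i* or w' ∈ B_{i+1}*. -/
import Mathlib


/-- `H` is contained in `G` as an induced subgraph. -/
def ContainsInduced {α β : Type*} (H : SimpleGraph α) (G : SimpleGraph β) : Prop :=
  ∃ f : α ↪ β, ∀ a b, G.Adj (f a) (f b) ↔ H.Adj a b

/-- The bull: a triangle `v2 v3 v4` with pendant edges `v1 v2` and `v4 v5`. -/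
def bull : SimpleGraph (Fin 5) :=
  SimpleGraph.fromRel (fun a b =>
    ((a : ℕ), (b : ℕ)) ∈ [(0, 1), (1, 2), (2, 3), (3, 4), (1, 3)])

/-- `u : ZMod k → V` lists the vertices (in cyclic order) of an induced cycle of
length `k` in `G`. -/
def IsInducedCycle {V : Type*} (G : SimpleGraph V) {k : ℕ} (u : ZMod k → V) : Prop :=
  Function.Injective u ∧ ∀ i j : ZMod k, G.Adj (u i) (u j) ↔ (j = i + 1 ∨ i = j + 1)

/-- `v : ZMod p → V` is a smallest induced odd cycle of `G` of length `p ≥ 5`: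
an induced odd cycle of length `p ≥ 5` such that `G` has no induced odd cycle of
length `k` with `5 ≤ k < p`. -/
def IsSmallestInducedOddCycle {V : Type*} (G : SimpleGraph V) {p : ℕ}
    (v : ZMod p → V) : Prop :=
  5 ≤ p ∧ Odd p ∧ IsInducedCycle G v ∧
    ∀ k : ℕ, 5 ≤ k → k < p → Odd k → ∀ u : ZMod k → V, ¬ IsInducedCycle G u

/-- `A_i`: the vertices outside the cycle `Q` whose neighbourhood on `Q` is
exactly `{v_i}`. -/
def setA {V : Type*} (G : SimpleGraph V) {p : ℕ} (v : ZMod p → V) (i : ZMod p) :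
    Set V :=
  {w | w ∉ Set.range v ∧ ∀ j : ZMod p, G.Adj w (v j) ↔ j = i}

/-- `B_i`: the vertices outside the cycle `Q` whose neighbourhood on `Q` is
exactly `{v_i, v_{i+2}}`. -/
def setB {V : Type*} (G : SimpleGraph V) {p : ℕ} (v : ZMod p → V) (i : ZMod p) :
    Set V :=
  {w | w ∉ Set.range v ∧ ∀ j : ZMod p, G.Adj w (v j) ↔ (j = i ∨ j = i + 2)}

/-- `C_i`: the vertices outside the cycle `Q` whose neighbourhood on `Q` is
exactly `{v_i, v_{i+1}, v_{i+2}}`. -/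
def setC {V : Type*} (G : SimpleGraph V) {p : ℕ} (v : ZMod p → V) (i : ZMod p) :
    Set V :=
  {w | w ∉ Set.range v ∧ ∀ j : ZMod p, G.Adj w (v j) ↔ (j = i ∨ j = i + 1 ∨ j = i + 2)}

/-- `D_i`: the vertices outside the cycle `Q` whose neighbourhood on `Q` is
exactly `{v_i, v_{i+1}, v_{i+2}, v_{i+3}}`. -/
def setD {V : Type*} (G : SimpleGraph V) {p : ℕ} (v : ZMod p → V) (i : ZMod p) :
    Set V :=
  {w | w ∉ Set.range v ∧
    ∀ j : ZMod p, G.Adj w (v j) ↔ (j = i ∨ j = i + 1 ∨ j = i + 2 ∨ j = i + 3)}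

/-- `A_i'`: the vertices of `A_i` having a neighbour in `A_i`. -/
def setA' {V : Type*} (G : SimpleGraph V) {p : ℕ} (v : ZMod p → V) (i : ZMod p) :
    Set V :=
  {w ∈ setA G v i | ∃ w' ∈ setA G v i, G.Adj w w'}

/-- `B_i'`: the vertices of `B_i` having a neighbour in `B_i ∪ C_i`. -/
def setB' {V : Type*} (G : SimpleGraph V) {p : ℕ} (v : ZMod p → V) (i : ZMod p) :
    Set V :=
  {w ∈ setB G v i | ∃ w' ∈ setB G v i ∪ setC G v i, G.Adj w w'}

/-- `B_i* = B_i ∖ B_i'`: the vertices of `B_i` with no neighbour in `B_i ∪ C_i`. -/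
def setBstar {V : Type*} (G : SimpleGraph V) {p : ℕ} (v : ZMod p → V) (i : ZMod p) :
    Set V :=
  setB G v i \ setB' G v i


section AuxiliaryLemmas

instance : DecidableRel bull.Adj := fun a b =>
  decidable_of_iff' _ (SimpleGraph.fromRel_adj _ a b)

/-- If `G` is bull-free, there is no induced bull on five explicit vertices
`x0, x1, x2, x3, x4` (triangle `x1 x2 x3`, pendants `x0 - x1` and `x3 - x4`). -/
lemma bull_free_aux {V : Type*} {G : SimpleGraph V}
    (hbull : ¬ ContainsInduced bull G) (x0 x1 x2 x3 x4 : V)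
    (a01 : G.Adj x0 x1) (a12 : G.Adj x1 x2) (a13 : G.Adj x1 x3)
    (a23 : G.Adj x2 x3) (a34 : G.Adj x3 x4)
    (n02 : ¬ G.Adj x0 x2) (n03 : ¬ G.Adj x0 x3) (n04 : ¬ G.Adj x0 x4)
    (n14 : ¬ G.Adj x1 x4) (n24 : ¬ G.Adj x2 x4)
    (d02 : x0 ≠ x2) (d03 : x0 ≠ x3) (d04 : x0 ≠ x4)
    (d14 : x1 ≠ x4) (d24 : x2 ≠ x4) : False := by
  apply hbull
  have ne01 := a01.ne; have ne12 := a12.ne; have ne13 := a13.ne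
  have ne23 := a23.ne; have ne34 := a34.ne
  have inj : Function.Injective ![x0, x1, x2, x3, x4] := by
    intro a b hab
    fin_cases a <;> fin_cases b <;> simp_all
  refine ⟨⟨![x0, x1, x2, x3, x4], inj⟩, ?_⟩
  intro a b
  fin_cases a <;> fin_cases b <;>
    first
      | exact iff_of_false (G.irrefl) (by decide)
      | exact iff_of_true a01 (by decide)
      | exact iff_of_true a01.symm (by decide)
      | exact iff_of_true a12 (by decide)
      | exact iff_of_true a12.symm (by decide)
      | exact iff_of_true a13 (by decide)
      | exact iff_of_true a13.symm (by decide)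
      | exact iff_of_true a23 (by decide)
      | exact iff_of_true a23.symm (by decide)
      | exact iff_of_true a34 (by decide)
      | exact iff_of_true a34.symm (by decide)
      | exact iff_of_false n02 (by decide)
      | exact iff_of_false (fun h => n02 h.symm) (by decide)
      | exact iff_of_false n03 (by decide)
      | exact iff_of_false (fun h => n03 h.symm) (by decide)
      | exact iff_of_false n04 (by decide)
      | exact iff_of_false (fun h => n04 h.symm) (by decide)
      | exact iff_of_false n14 (by decide)
      | exact iff_of_false (fun h => n14 h.symm) (by decide)
      | exact iff_of_false n24 (by decide)
      | exact iff_of_false (fun h => n24 h.symm) (by decide)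

/-- If `G` is `K₄`-free, there are no four pairwise adjacent vertices. -/
lemma k4_free_aux {V : Type*} {G : SimpleGraph V} (hK4 : G.CliqueFree 4) (a b c d : V)
    (hab : G.Adj a b) (hac : G.Adj a c) (had : G.Adj a d)
    (hbc : G.Adj b c) (hbd : G.Adj b d) (hcd : G.Adj c d) : False := by
  classical
  refine hK4 {a, b, c, d} ⟨?_, ?_⟩
  · rintro x hx y hy hxy
    simp only [Finset.coe_insert, Set.mem_insert_iff, Finset.coe_singleton,
      Set.mem_singleton_iff] at hx hy
    rcases hx with rfl | rfl | rfl | rfl <;> rcases hy with rfl | rfl | rfl | rfl <;>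
      first
        | exact absurd rfl hxy
        | assumption
        | exact hab.symm
        | exact hac.symm
        | exact had.symm
        | exact hbc.symm
        | exact hbd.symm
        | exact hcd.symm
  · have h1 := hab.ne; have h2 := hac.ne; have h3 := had.ne
    have h4 := hbc.ne; have h5 := hbd.ne; have h6 := hcd.ne
    rw [Finset.card_insert_of_notMem (by simp [h1, h2, h3]),
      Finset.card_insert_of_notMem (by simp [h4, h5]),
      Finset.card_insert_of_notMem (by simp [h6]), Finset.card_singleton]

lemma zmod_ne_helper {p : ℕ} (hp : 5 ≤ p) {x y : ZMod p} {c : ℕ} (h0 : 0 < c) (h5 : c < 5)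
    (hxy : x - y = (c : ZMod p) ∨ y - x = (c : ZMod p)) : x ≠ y := by
  have : NeZero p := ⟨by omega⟩
  rintro rfl
  have hc : (c : ZMod p) = 0 := by rcases hxy with h | h <;> linear_combination -h
  have := congrArg ZMod.val hc
  rw [ZMod.val_cast_of_lt (by omega), ZMod.val_zero] at this
  omega

variable {V : Type*} {G : SimpleGraph V} {p : ℕ} {v : ZMod p → V}

lemma mem_BC_ne_v {k : ZMod p} {x : V} (hx : x ∈ setB G v k ∪ setC G v k) (j : ZMod p) :
    x ≠ v j := by
  rcases hx with hx | hx <;> exact fun h => hx.1 ⟨j, h.symm⟩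

lemma adj_of_mem_BC_left {k : ZMod p} {x : V} (hx : x ∈ setB G v k ∪ setC G v k) :
    G.Adj x (v k) := by
  rcases hx with hx | hx
  · exact (hx.2 k).mpr (Or.inl rfl)
  · exact (hx.2 k).mpr (Or.inl rfl)

lemma adj_of_mem_BC_right {k : ZMod p} {x : V} (hx : x ∈ setB G v k ∪ setC G v k)
    {j : ZMod p} (hj : j = k + 2) : G.Adj x (v j) := by
  subst hj
  rcases hx with hx | hx
  · exact (hx.2 _).mpr (Or.inr rfl)
  · exact (hx.2 _).mpr (Or.inr (Or.inr rfl))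

lemma adj_of_mem_C_mid {k : ZMod p} {x : V} (hx : x ∈ setC G v k)
    {j : ZMod p} (hj : j = k + 1) : G.Adj x (v j) := by
  subst hj
  exact (hx.2 _).mpr (Or.inr (Or.inl rfl))

lemma not_adj_of_mem_BC {k : ZMod p} {x : V} (hx : x ∈ setB G v k ∪ setC G v k) (j : ZMod p)
    (h0 : j ≠ k) (h1 : j ≠ k + 1) (h2 : j ≠ k + 2) : ¬ G.Adj x (v j) := by
  rcases hx with hx | hx
  · rw [hx.2 j]
    rintro (h | h)
    exacts [h0 h, h2 h]
  · rw [hx.2 j]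
    rintro (h | h | h)
    exacts [h0 h, h1 h, h2 h]

/-- Bull of type A: triangle `w u v_i`, pendants `x — w` and `v_{i-1} — v_i`,
where `w ∈ B_i`, `u ∈ B_i ∪ C_i` and `x ∈ B_{i+1} ∪ C_{i+1}`. -/
lemma bullA (hbull : ¬ ContainsInduced bull G) (hp : 5 ≤ p)
    (hv : ∀ a b : ZMod p, G.Adj (v a) (v b) ↔ (b = a + 1 ∨ a = b + 1)) (i : ZMod p)
    {w u x : V} (hwB : w ∈ setB G v i) (hu : u ∈ setB G v i ∪ setC G v i)
    (hx : x ∈ setB G v (i + 1) ∪ setC G v (i + 1))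
    (hwu : G.Adj w u) (hwx : G.Adj w x) (hxu : ¬ G.Adj x u) : False := by
  have hZ : ∀ (a b : ZMod p) (c : ℕ), 0 < c → c < 5 →
      (a - b = (c : ZMod p) ∨ b - a = (c : ZMod p)) → a ≠ b :=
    fun a b c h0 h5 h => zmod_ne_helper hp h0 h5 h
  have hwBC : w ∈ setB G v i ∪ setC G v i := Or.inl hwB
  have n03 : ¬ G.Adj x (v i) :=
    not_adj_of_mem_BC hx i
      (hZ _ _ 1 (by norm_num) (by norm_num) (Or.inr (by push_cast; ring)))
      (hZ _ _ 2 (by norm_num) (by norm_num) (Or.inr (by push_cast; ring)))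
      (hZ _ _ 3 (by norm_num) (by norm_num) (Or.inr (by push_cast; ring)))
  have n04 : ¬ G.Adj x (v (i - 1)) :=
    not_adj_of_mem_BC hx (i - 1)
      (hZ _ _ 2 (by norm_num) (by norm_num) (Or.inr (by push_cast; ring)))
      (hZ _ _ 3 (by norm_num) (by norm_num) (Or.inr (by push_cast; ring)))
      (hZ _ _ 4 (by norm_num) (by norm_num) (Or.inr (by push_cast; ring)))
  have n14 : ¬ G.Adj w (v (i - 1)) :=
    not_adj_of_mem_BC hwBC (i - 1)
      (hZ _ _ 1 (by norm_num) (by norm_num) (Or.inr (by push_cast; ring)))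
      (hZ _ _ 2 (by norm_num) (by norm_num) (Or.inr (by push_cast; ring)))
      (hZ _ _ 3 (by norm_num) (by norm_num) (Or.inr (by push_cast; ring)))
  have n24 : ¬ G.Adj u (v (i - 1)) :=
    not_adj_of_mem_BC hu (i - 1)
      (hZ _ _ 1 (by norm_num) (by norm_num) (Or.inr (by push_cast; ring)))
      (hZ _ _ 2 (by norm_num) (by norm_num) (Or.inr (by push_cast; ring)))
      (hZ _ _ 3 (by norm_num) (by norm_num) (Or.inr (by push_cast; ring)))
  exact bull_free_aux hbull x w u (v i) (v (i - 1)) hwx.symm hwu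
    (adj_of_mem_BC_left hwBC) (adj_of_mem_BC_left hu)
    ((hv i (i - 1)).mpr (Or.inr (by ring)))
    hxu n03 n04 n14 n24
    (fun h => n03 (by rw [h]; exact adj_of_mem_BC_left hu))
    (mem_BC_ne_v hx i) (mem_BC_ne_v hx (i - 1)) (mem_BC_ne_v hwBC (i - 1))
    (mem_BC_ne_v hu (i - 1))

/-- Bull of type B: triangle `w' u' v_{i+3}`, pendants `x — w'` and `v_{i+4} — v_{i+3}`,
where `w' ∈ B_{i+1}`, `u' ∈ B_{i+1} ∪ C_{i+1}` and `x ∈ B_i ∪ C_i`. -/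
lemma bullB (hbull : ¬ ContainsInduced bull G) (hp : 5 ≤ p)
    (hv : ∀ a b : ZMod p, G.Adj (v a) (v b) ↔ (b = a + 1 ∨ a = b + 1)) (i : ZMod p)
    {w' u' x : V} (hw'B : w' ∈ setB G v (i + 1))
    (hu' : u' ∈ setB G v (i + 1) ∪ setC G v (i + 1))
    (hx : x ∈ setB G v i ∪ setC G v i)
    (hw'u' : G.Adj w' u') (hw'x : G.Adj w' x) (hxu' : ¬ G.Adj x u') : False := by
  have hZ : ∀ (a b : ZMod p) (c : ℕ), 0 < c → c < 5 →
      (a - b = (c : ZMod p) ∨ b - a = (c : ZMod p)) → a ≠ b :=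
    fun a b c h0 h5 h => zmod_ne_helper hp h0 h5 h
  have hw'BC : w' ∈ setB G v (i + 1) ∪ setC G v (i + 1) := Or.inl hw'B
  have a23 : G.Adj u' (v (i + 3)) := adj_of_mem_BC_right hu' (by ring)
  have n03 : ¬ G.Adj x (v (i + 3)) :=
    not_adj_of_mem_BC hx (i + 3)
      (hZ _ _ 3 (by norm_num) (by norm_num) (Or.inl (by push_cast; ring)))
      (hZ _ _ 2 (by norm_num) (by norm_num) (Or.inl (by push_cast; ring)))
      (hZ _ _ 1 (by norm_num) (by norm_num) (Or.inl (by push_cast; ring)))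
  have n04 : ¬ G.Adj x (v (i + 4)) :=
    not_adj_of_mem_BC hx (i + 4)
      (hZ _ _ 4 (by norm_num) (by norm_num) (Or.inl (by push_cast; ring)))
      (hZ _ _ 3 (by norm_num) (by norm_num) (Or.inl (by push_cast; ring)))
      (hZ _ _ 2 (by norm_num) (by norm_num) (Or.inl (by push_cast; ring)))
  have n14 : ¬ G.Adj w' (v (i + 4)) :=
    not_adj_of_mem_BC hw'BC (i + 4)
      (hZ _ _ 3 (by norm_num) (by norm_num) (Or.inl (by push_cast; ring)))
      (hZ _ _ 2 (by norm_num) (by norm_num) (Or.inl (by push_cast; ring)))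
      (hZ _ _ 1 (by norm_num) (by norm_num) (Or.inl (by push_cast; ring)))
  have n24 : ¬ G.Adj u' (v (i + 4)) :=
    not_adj_of_mem_BC hu' (i + 4)
      (hZ _ _ 3 (by norm_num) (by norm_num) (Or.inl (by push_cast; ring)))
      (hZ _ _ 2 (by norm_num) (by norm_num) (Or.inl (by push_cast; ring)))
      (hZ _ _ 1 (by norm_num) (by norm_num) (Or.inl (by push_cast; ring)))
  exact bull_free_aux hbull x w' u' (v (i + 3)) (v (i + 4)) hw'x.symm hw'u'
    (adj_of_mem_BC_right hw'BC (by ring)) a23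
    ((hv (i + 3) (i + 4)).mpr (Or.inl (by ring)))
    hxu' n03 n04 n14 n24
    (fun h => n03 (by rw [h]; exact a23))
    (mem_BC_ne_v hx (i + 3)) (mem_BC_ne_v hx (i + 4)) (mem_BC_ne_v hw'BC (i + 4))
    (mem_BC_ne_v hu' (i + 4))

end AuxiliaryLemmas

/-- Let `G` be a bull-free graph with no `K_4` subgraph, and let `Q` be a smallest
induced odd cycle of `G` of length `p ≥ 5`.  If `w ∈ B_i ∪ C_i`, `w' ∈ B_{i+1} ∪ C_{i+1}`
and `w w'` is an edge of `G`, then `w ∈ B_i*` or `w' ∈ B_{i+1}*`. -/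
theorem edge_consecutive_imp_Bstar {V : Type*} [Fintype V] (G : SimpleGraph V)
    (hbull : ¬ ContainsInduced bull G) (hK4 : G.CliqueFree 4)
    {p : ℕ} (v : ZMod p → V) (hQ : IsSmallestInducedOddCycle G v)
    (i : ZMod p) (w w' : V)
    (hw : w ∈ setB G v i ∪ setC G v i) (hw' : w' ∈ setB G v (i + 1) ∪ setC G v (i + 1))
    (hadj : G.Adj w w') :
    w ∈ setBstar G v i ∨ w' ∈ setBstar G v (i + 1) := by
  classical
  obtain ⟨hp5, -, ⟨hvinj, hv⟩, -⟩ := hQ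
  by_contra hcon
  push_neg at hcon
  obtain ⟨hns, hns'⟩ := hcon
  -- if `w ∈ B_i`, it has a neighbour in `B_i ∪ C_i`
  have getu : w ∈ setB G v i → ∃ u ∈ setB G v i ∪ setC G v i, G.Adj w u := by
    intro hB
    by_contra hno
    push_neg at hno
    exact hns ⟨hB, fun hmem => (hno _ hmem.2.choose_spec.1) hmem.2.choose_spec.2⟩
  have getu' : w' ∈ setB G v (i + 1) →
      ∃ u' ∈ setB G v (i + 1) ∪ setC G v (i + 1), G.Adj w' u' := by
    intro hB
    by_contra hno
    push_neg at hno
    exact hns' ⟨hB, fun hmem => (hno _ hmem.2.choose_spec.1) hmem.2.choose_spec.2⟩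
  rcases hw with hwB | hwC
  · rcases hw' with hw'B | hw'C
    · -- w ∈ B_i, w' ∈ B_{i+1}
      obtain ⟨u, hu, hwu⟩ := getu hwB
      obtain ⟨u', hu', hw'u'⟩ := getu' hw'B
      by_cases hUW' : G.Adj u w'
      · rcases hu with huB | huC
        · by_cases hU'W : G.Adj u' w
          · rcases hu' with hu'B | hu'C
            · by_cases hUU' : G.Adj u u'
              · -- K4 on {w, u, w', u'}
                exact k4_free_aux hK4 w u w' u' hwu hadj hU'W.symm hUW' hUU' hw'u'
              · exact bullA hbull hp5 hv i hwB (Or.inl huB) (Or.inl hu'B) hwu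
                  hU'W.symm (fun h => hUU' h.symm)
            · by_cases hU'U : G.Adj u' u
              · -- K4 on {u', w, u, v (i+2)}
                exact k4_free_aux hK4 u' w u (v (i + 2)) hU'W hU'U
                  (adj_of_mem_C_mid hu'C (by ring)) hwu
                  (adj_of_mem_BC_right (Or.inl hwB) rfl)
                  (adj_of_mem_BC_right (Or.inl huB) rfl)
              · exact bullA hbull hp5 hv i hwB (Or.inl huB) (Or.inr hu'C) hwu
                  hU'W.symm hU'U
          · exact bullB hbull hp5 hv i hw'B hu' (Or.inl hwB) hw'u' hadj.symm
              (fun h => hU'W h.symm)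
        · by_cases hUU' : G.Adj u u'
          · -- K4 on {u, w', u', v (i+1)}
            exact k4_free_aux hK4 u w' u' (v (i + 1)) hUW' hUU'
              (adj_of_mem_C_mid huC rfl) hw'u'
              (adj_of_mem_BC_left (Or.inl hw'B)) (adj_of_mem_BC_left hu')
          · exact bullB hbull hp5 hv i hw'B hu' (Or.inr huC) hw'u' hUW'.symm hUU'
      · exact bullA hbull hp5 hv i hwB hu (Or.inl hw'B) hwu hadj
          (fun h => hUW' h.symm)
    · -- w ∈ B_i, w' ∈ C_{i+1}
      obtain ⟨u, hu, hwu⟩ := getu hwB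
      by_cases hA : G.Adj w' u
      · -- K4 on {w', w, u, v (i+2)}
        exact k4_free_aux hK4 w' w u (v (i + 2)) hadj.symm hA
          (adj_of_mem_C_mid hw'C (by ring)) hwu
          (adj_of_mem_BC_right (Or.inl hwB) rfl) (adj_of_mem_BC_right hu rfl)
      · exact bullA hbull hp5 hv i hwB hu (Or.inr hw'C) hwu hadj hA
  · rcases hw' with hw'B | hw'C
    · -- w ∈ C_i, w' ∈ B_{i+1}
      obtain ⟨u', hu', hw'u'⟩ := getu' hw'B
      by_cases hA : G.Adj w u'
      · -- K4 on {w, w', u', v (i+1)}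
        exact k4_free_aux hK4 w w' u' (v (i + 1)) hadj hA
          (adj_of_mem_C_mid hwC rfl) hw'u'
          (adj_of_mem_BC_left (Or.inl hw'B)) (adj_of_mem_BC_left hu')
      · exact bullB hbull hp5 hv i hw'B hu' (Or.inr hwC) hw'u' hadj.symm hA
    · -- w ∈ C_i, w' ∈ C_{i+1} : K4 on {w, w', v (i+1), v (i+2)}
      exact k4_free_aux hK4 w w' (v (i + 1)) (v (i + 2)) hadj
        (adj_of_mem_C_mid hwC rfl) (adj_of_mem_BC_right (Or.inr hwC) rfl)
        (adj_of_mem_BC_left (Or.inr hw'C)) (adj_of_mem_C_mid hw'C (by ring))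
        ((hv (i + 1) (i + 2)).mpr (Or.inl (by ring)))
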